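/- Consider the ORFM. For every fixed total number of ribosomes N_r > 0, there exists exactly one steady state (x_e, z_e) of the ORFM (a point of Ω at which every component of the ORFM vector field vanishes) satisfying N_r(x_e, z_e) = N_r; moreover this steady state is strictly positive, i.e., x_e has every codon occupancy in the open interval (0,1), z_{e,E} > 0, and z_{e,p} > 0 for every p. -/

import Mathlib

/-- State of an ORFM: codon occupancies `x p i j` (species `p`, strand `i`,
codon `j`, 1-based so that `j` ranges over `1,…,n p i`), translating-pool
occupancies `z p`, and the empty-ribosome pool occupancy `zE`.
(Only the coordinates with `p < M`, `i < s p`, `1 ≤ j ≤ n p i` are meaningful.) -/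
structure ORFMState where
  x : ℕ → ℕ → ℕ → ℝ
  z : ℕ → ℝ
  zE : ℝ

/-- The data of an Orthogonal Ribosomal Flow Model (ORFM): `M ≥ 1` ribosome
species, `s p` strands for species `p`, strand `(p,i)` of length `n p i ≥ 1`
with multiplicity `m p i ≥ 1` and positive rates `lam p i 0, …, lam p i (n p i)`,
an initiation function `G p i` (continuously differentiable on `[0,∞)`,
strictly increasing on `[0,∞)`, vanishing at `0`), and binding rates
`kp p > 0`, `km p > 0`. -/
structure ORFM where
  M : ℕ
  s : ℕ → ℕ
  n : ℕ → ℕ → ℕ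
  m : ℕ → ℕ → ℕ
  lam : ℕ → ℕ → ℕ → ℝ
  G : ℕ → ℕ → ℝ → ℝ
  kp : ℕ → ℝ
  km : ℕ → ℝ
  hM : 0 < M
  hn : ∀ p < M, ∀ i < s p, 1 ≤ n p i
  hm : ∀ p < M, ∀ i < s p, 1 ≤ m p i
  hlam : ∀ p < M, ∀ i < s p, ∀ j ≤ n p i, 0 < lam p i j
  hG_smooth : ∀ p < M, ∀ i < s p, ContDiffOn ℝ 1 (G p i) (Set.Ici 0)
  hG_mono : ∀ p < M, ∀ i < s p, StrictMonoOn (G p i) (Set.Ici 0)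
  hG_zero : ∀ p < M, ∀ i < s p, G p i 0 = 0
  hkp : ∀ p < M, 0 < kp p
  hkm : ∀ p < M, 0 < km p

/-- Ribosomal flux from codon `k` to codon `k+1` on strand `(p,i)`
(`k = 0` is initiation from the pool `z p`, `k = n p i` is termination). -/
noncomputable def ORFM.flow (S : ORFM) (st : ORFMState) (p i k : ℕ) : ℝ :=
  if k = 0 then S.lam p i 0 * S.G p i (st.z p) * (1 - st.x p i 1)
  else if k = S.n p i then S.lam p i k * st.x p i k
  else S.lam p i k * st.x p i k * (1 - st.x p i (k + 1))

/-- Component of the ORFM vector field for codon `j` (1-based) of strand `(p,i)`: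
`dx^{pi}_j/dt` = inflow minus outflow. -/
noncomputable def ORFM.fx (S : ORFM) (st : ORFMState) (p i j : ℕ) : ℝ :=
  S.flow st p i (j - 1) - S.flow st p i j

/-- Component of the ORFM vector field for the pool `z p`: `dz_p/dt`. -/
noncomputable def ORFM.fz (S : ORFM) (st : ORFMState) (p : ℕ) : ℝ :=
  S.kp p * st.zE - S.km p * st.z p
    + ∑ i ∈ Finset.range (S.s p), (S.m p i : ℝ) * S.flow st p i (S.n p i)
    - ∑ i ∈ Finset.range (S.s p), (S.m p i : ℝ) * S.flow st p i 0

/-- Component of the ORFM vector field for the empty pool: `dz_E/dt`. -/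
noncomputable def ORFM.fzE (S : ORFM) (st : ORFMState) : ℝ :=
  ∑ p ∈ Finset.range S.M, S.km p * st.z p - ∑ p ∈ Finset.range S.M, S.kp p * st.zE

/-- Membership in the state space `Ω`: all codon occupancies lie in `[0,1]`
and all pools are nonnegative. -/
def ORFM.inOmega (S : ORFM) (st : ORFMState) : Prop :=
  (∀ p < S.M, ∀ i < S.s p, ∀ j, 1 ≤ j → j ≤ S.n p i → st.x p i j ∈ Set.Icc (0:ℝ) 1)
    ∧ 0 ≤ st.zE ∧ ∀ p < S.M, 0 ≤ st.z p

/-- The total ribosome count `N_r(x,z)`. -/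
noncomputable def ORFM.NrOf (S : ORFM) (st : ORFMState) : ℝ :=
  st.zE + ∑ p ∈ Finset.range S.M, st.z p
    + ∑ p ∈ Finset.range S.M, ∑ i ∈ Finset.range (S.s p),
        (S.m p i : ℝ) * ∑ j ∈ Finset.Icc 1 (S.n p i), st.x p i j

/-- A steady state: every component of the ORFM vector field vanishes. -/
def ORFM.isSteady (S : ORFM) (st : ORFMState) : Prop :=
  (∀ p < S.M, ∀ i < S.s p, ∀ j, 1 ≤ j → j ≤ S.n p i → S.fx st p i j = 0)
    ∧ (∀ p < S.M, S.fz st p = 0) ∧ S.fzE st = 0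

/-- A (forward-time) solution of the ORFM: every meaningful coordinate is
differentiable in time with derivative given by the corresponding component
of the ORFM vector field, for all `t ≥ 0`. -/
def ORFM.isSolution (S : ORFM) (traj : ℝ → ORFMState) : Prop :=
  (∀ t, 0 ≤ t → ∀ p < S.M, ∀ i < S.s p, ∀ j, 1 ≤ j → j ≤ S.n p i →
      HasDerivAt (fun τ => (traj τ).x p i j) (S.fx (traj t) p i j) t)
    ∧ (∀ t, 0 ≤ t → ∀ p < S.M,
        HasDerivAt (fun τ => (traj τ).z p) (S.fz (traj t) p) t)
    ∧ ∀ t, 0 ≤ t → HasDerivAt (fun τ => (traj τ).zE) (S.fzE (traj t)) t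

/-- Two states agree on all the meaningful coordinates of the ORFM `S`. -/
def ORFM.stateEq (S : ORFM) (a b : ORFMState) : Prop :=
  (∀ p < S.M, ∀ i < S.s p, ∀ j, 1 ≤ j → j ≤ S.n p i → a.x p i j = b.x p i j)
    ∧ (∀ p < S.M, a.z p = b.z p) ∧ a.zE = b.zE



open Set Filter Topology
set_option linter.unusedSectionVars false
set_option linter.unusedVariables false

namespace ORFMAux

/-- occupancy of site `n - d` as a function of the steady flow `R` (backward recursion). -/
noncomputable def Xc (lam : ℕ → ℝ) (n : ℕ) : ℕ → ℝ → ℝ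
  | 0 => fun R => R / lam n
  | (d+1) => fun R => R / (lam (n - (d+1)) * (1 - Xc lam n d R))

def Dset (lam : ℕ → ℝ) (n : ℕ) : Set ℝ := {R | 0 ≤ R ∧ ∀ e < n, Xc lam n e R < 1}

noncomputable def gfun (lam : ℕ → ℝ) (n : ℕ) (R : ℝ) : ℝ :=
  R / (lam 0 * (1 - Xc lam n (n-1) R))

noncomputable def rho (lam : ℕ → ℝ) (n : ℕ) (t : ℝ) : ℝ :=
  sInf {R | R ∈ Dset lam n ∧ gfun lam n R = t}

variable {lam : ℕ → ℝ} {n : ℕ}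

lemma Xc_zero (d : ℕ) : Xc lam n d 0 = 0 := by
  induction d with
  | zero => simp [Xc]
  | succ d ih => simp [Xc]

section

variable (hlam : ∀ j ≤ n, 0 < lam j) (hn : 1 ≤ n)
include hlam

lemma Xc_nonneg {R : ℝ} (hR : 0 ≤ R) :
    ∀ d, (∀ e < d, Xc lam n e R < 1) → 0 ≤ Xc lam n d R := by
  intro d h
  cases d with
  | zero => exact div_nonneg hR (hlam n le_rfl).le
  | succ d =>
    have hd : Xc lam n d R < 1 := h d (Nat.lt_succ_self d)
    have hpos : 0 < lam (n - (d+1)) * (1 - Xc lam n d R) :=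
      mul_pos (hlam _ (Nat.sub_le _ _)) (by linarith)
    exact div_nonneg hR hpos.le

lemma Xc_pos {R : ℝ} (hR : 0 < R) :
    ∀ d, (∀ e < d, Xc lam n e R < 1) → 0 < Xc lam n d R := by
  intro d h
  cases d with
  | zero => exact div_pos hR (hlam n le_rfl)
  | succ d =>
    have hd : Xc lam n d R < 1 := h d (Nat.lt_succ_self d)
    have hpos : 0 < lam (n - (d+1)) * (1 - Xc lam n d R) :=
      mul_pos (hlam _ (Nat.sub_le _ _)) (by linarith)
    exact div_pos hR hpos

lemma Xc_mono {R R' : ℝ} (hR : 0 ≤ R) (hRR : R ≤ R') :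
    ∀ d, (∀ e < d, Xc lam n e R' < 1) → Xc lam n d R ≤ Xc lam n d R' := by
  intro d
  induction d using Nat.strong_induction_on with
  | _ d IH =>
    intro h
    cases d with
    | zero =>
      show R / lam n ≤ R' / lam n
      exact by gcongr; exact (hlam n le_rfl).le
    | succ d =>
      have hd' : Xc lam n d R' < 1 := h d (Nat.lt_succ_self d)
      have hle : Xc lam n d R ≤ Xc lam n d R' :=
        IH d (Nat.lt_succ_self d) (fun e he => h e (he.trans (Nat.lt_succ_self d)))
      have hlt : Xc lam n d R < 1 := lt_of_le_of_lt hle hd'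
      have hXR : 0 ≤ Xc lam n d R := by
        refine Xc_nonneg hlam hR d (fun e he => ?_)
        exact lt_of_le_of_lt
          (IH e (he.trans (Nat.lt_succ_self d)) (fun e' he' => h e' (he'.trans (he.trans (Nat.lt_succ_self d)))))
          (h e (he.trans (Nat.lt_succ_self d)))
      show R / (lam (n - (d+1)) * (1 - Xc lam n d R)) ≤ R' / (lam (n - (d+1)) * (1 - Xc lam n d R'))
      have hlp : 0 < lam (n - (d+1)) := hlam _ (Nat.sub_le _ _)
      have h1 : 0 < lam (n - (d+1)) * (1 - Xc lam n d R') := mul_pos hlp (by linarith)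
      have h2 : lam (n - (d+1)) * (1 - Xc lam n d R') ≤ lam (n - (d+1)) * (1 - Xc lam n d R) := by
        apply mul_le_mul_of_nonneg_left (by linarith) hlp.le
      exact div_le_div₀ (le_trans hR hRR) hRR h1 h2

lemma Xc_strict_mono {R R' : ℝ} (hR : 0 ≤ R) (hRR : R < R') :
    ∀ d, (∀ e < d, Xc lam n e R' < 1) → Xc lam n d R < Xc lam n d R' := by
  intro d h
  cases d with
  | zero =>
    show R / lam n < R' / lam n
    exact by gcongr; exact hlam n le_rfl
  | succ d =>
    have hd' : Xc lam n d R' < 1 := h d (Nat.lt_succ_self d)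
    have hle : Xc lam n d R ≤ Xc lam n d R' :=
      Xc_mono hlam hR hRR.le d (fun e he => h e (he.trans (Nat.lt_succ_self d)))
    have hlt : Xc lam n d R < 1 := lt_of_le_of_lt hle hd'
    show R / (lam (n - (d+1)) * (1 - Xc lam n d R)) < R' / (lam (n - (d+1)) * (1 - Xc lam n d R'))
    have hlp : 0 < lam (n - (d+1)) := hlam _ (Nat.sub_le _ _)
    have h1 : 0 < lam (n - (d+1)) * (1 - Xc lam n d R') := mul_pos hlp (by linarith)
    have h2 : lam (n - (d+1)) * (1 - Xc lam n d R') ≤ lam (n - (d+1)) * (1 - Xc lam n d R) :=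
      mul_le_mul_of_nonneg_left (by linarith) hlp.le
    calc R / (lam (n - (d+1)) * (1 - Xc lam n d R))
        ≤ R / (lam (n - (d+1)) * (1 - Xc lam n d R')) := by
          gcongr
      _ < R' / (lam (n - (d+1)) * (1 - Xc lam n d R')) := by
          gcongr


lemma Xc_contAt {R₀ : ℝ} :
    ∀ d, (∀ e < d, Xc lam n e R₀ < 1) → ContinuousAt (Xc lam n d) R₀ := by
  intro d
  induction d with
  | zero =>
    intro _
    exact (continuousAt_id).div continuousAt_const (ne_of_gt (hlam n le_rfl))
  | succ d IH =>
    intro h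
    have hd : Xc lam n d R₀ < 1 := h d (Nat.lt_succ_self d)
    have hc : ContinuousAt (Xc lam n d) R₀ := IH (fun e he => h e (he.trans (Nat.lt_succ_self d)))
    have hne : lam (n - (d+1)) * (1 - Xc lam n d R₀) ≠ 0 :=
      ne_of_gt (mul_pos (hlam _ (Nat.sub_le _ _)) (by linarith))
    show ContinuousAt (fun R => R / (lam (n - (d+1)) * (1 - Xc lam n d R))) R₀
    exact (continuousAt_id).div (continuousAt_const.mul (continuousAt_const.sub hc)) hne

lemma Dset_down {R R' : ℝ} (hR' : R' ∈ Dset lam n) (hR : 0 ≤ R) (hRR : R ≤ R') :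
    R ∈ Dset lam n :=
  ⟨hR, fun e he => lt_of_le_of_lt
    (Xc_mono hlam hR hRR e (fun e' he' => hR'.2 e' (he'.trans he))) (hR'.2 e he)⟩

include hn

lemma zero_mem_Dset : (0:ℝ) ∈ Dset lam n :=
  ⟨le_rfl, fun e _ => by rw [Xc_zero]; norm_num⟩

lemma Dset_lt_lam {R : ℝ} (hR : R ∈ Dset lam n) : R < lam n := by
  have h0 : Xc lam n 0 R < 1 := hR.2 0 hn
  have : R / lam n < 1 := h0
  exact (div_lt_one (hlam n le_rfl)).mp this

lemma Dset_bddAbove : BddAbove (Dset lam n) :=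
  ⟨lam n, fun R hR => (Dset_lt_lam hlam hn hR).le⟩

lemma gfun_nonneg {R : ℝ} (hR : R ∈ Dset lam n) : 0 ≤ gfun lam n R := by
  have h1 : Xc lam n (n-1) R < 1 := hR.2 (n-1) (Nat.sub_lt hn Nat.one_pos)
  exact div_nonneg hR.1 (mul_pos (hlam 0 (Nat.zero_le n)) (by linarith)).le

lemma gfun_zero : gfun lam n 0 = 0 := by simp [gfun]

lemma gfun_pos {R : ℝ} (hR : R ∈ Dset lam n) (h0 : 0 < R) : 0 < gfun lam n R := by
  have h1 : Xc lam n (n-1) R < 1 := hR.2 (n-1) (Nat.sub_lt hn Nat.one_pos)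
  exact div_pos h0 (mul_pos (hlam 0 (Nat.zero_le n)) (by linarith))

lemma gfun_strictMonoOn : StrictMonoOn (gfun lam n) (Dset lam n) := by
  intro R hR R' hR' hRR
  have hX : Xc lam n (n-1) R < Xc lam n (n-1) R' :=
    Xc_strict_mono hlam hR.1 hRR (n-1) (fun e he => hR'.2 e (he.trans (Nat.sub_lt hn Nat.one_pos)))
  have hX' : Xc lam n (n-1) R' < 1 := hR'.2 (n-1) (Nat.sub_lt hn Nat.one_pos)
  have hlp : 0 < lam 0 := hlam 0 (Nat.zero_le n)
  have h1 : 0 < lam 0 * (1 - Xc lam n (n-1) R') := mul_pos hlp (by linarith)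
  have h2 : lam 0 * (1 - Xc lam n (n-1) R') ≤ lam 0 * (1 - Xc lam n (n-1) R) :=
    mul_le_mul_of_nonneg_left (by linarith) hlp.le
  show R / (lam 0 * (1 - Xc lam n (n-1) R)) < R' / (lam 0 * (1 - Xc lam n (n-1) R'))
  calc R / (lam 0 * (1 - Xc lam n (n-1) R))
      ≤ R / (lam 0 * (1 - Xc lam n (n-1) R')) := by gcongr; exact hR.1
    _ < R' / (lam 0 * (1 - Xc lam n (n-1) R')) := by gcongr

lemma gfun_contAt {R : ℝ} (hR : R ∈ Dset lam n) : ContinuousAt (gfun lam n) R := by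
  have h1 : Xc lam n (n-1) R < 1 := hR.2 (n-1) (Nat.sub_lt hn Nat.one_pos)
  have hc : ContinuousAt (Xc lam n (n-1)) R :=
    Xc_contAt hlam _ (fun e he => hR.2 e (he.trans (Nat.sub_lt hn Nat.one_pos)))
  have hne : lam 0 * (1 - Xc lam n (n-1) R) ≠ 0 :=
    ne_of_gt (mul_pos (hlam 0 (Nat.zero_le n)) (by linarith))
  exact (continuousAt_id).div (continuousAt_const.mul (continuousAt_const.sub hc)) hne

lemma eventually_Xc_lt_one {R₀ : ℝ}
    (h : ∀ e < n, ContinuousAt (Xc lam n e) R₀ ∧ Xc lam n e R₀ < 1) :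
    ∀ᶠ R in nhds R₀, ∀ e < n, Xc lam n e R < 1 := by
  have key : ∀ k, k ≤ n → ∀ᶠ R in nhds R₀, ∀ e < k, Xc lam n e R < 1 := by
    intro k
    induction k with
    | zero => intro _; filter_upwards with R e he; omega
    | succ k IH =>
      intro hk
      have h1 := IH (le_of_lt hk)
      have h2 : ∀ᶠ R in nhds R₀, Xc lam n k R < 1 :=
        ((h k hk).1).eventually_lt continuousAt_const (h k hk).2
      filter_upwards [h1, h2] with R hA hB e he
      rcases Nat.lt_succ_iff_lt_or_eq.mp he with h | h
      · exact hA e h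
      · exact h ▸ hB
  exact key n le_rfl

lemma exists_gfun_eq {t : ℝ} (ht : 0 ≤ t) : ∃ R ∈ Dset lam n, gfun lam n R = t := by
  by_cases hex : ∃ R ∈ Dset lam n, t ≤ gfun lam n R
  · obtain ⟨R, hRD, hRt⟩ := hex
    have hsub : Icc (0:ℝ) R ⊆ Dset lam n := fun y hy => Dset_down hlam hRD hy.1 hy.2
    have hcont : ContinuousOn (gfun lam n) (Icc 0 R) := fun y hy =>
      (gfun_contAt hlam hn (hsub hy)).continuousWithinAt
    have hivt := intermediate_value_Icc hRD.1 hcont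
    have ht' : t ∈ Icc (gfun lam n 0) (gfun lam n R) := by
      rw [gfun_zero hlam hn]; exact ⟨ht, hRt⟩
    obtain ⟨R₀, hR₀, hgR₀⟩ := hivt ht'
    exact ⟨R₀, hsub hR₀, hgR₀⟩
  push_neg at hex
  exfalso
  set D := Dset lam n with hD
  set Rm := sSup D with hRm
  have hD0 : (0:ℝ) ∈ D := zero_mem_Dset hlam hn
  have hbdd : BddAbove D := Dset_bddAbove hlam hn
  -- Rm is positive
  have hev0 : ∀ e < n, ContinuousAt (Xc lam n e) 0 ∧ Xc lam n e (0:ℝ) < 1 := by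
    intro e he
    have h1 : ∀ e' < n, Xc lam n e' (0:ℝ) < 1 := fun e' _ => by rw [Xc_zero]; norm_num
    exact ⟨Xc_contAt hlam e (fun e' he' => h1 e' (he'.trans he)), h1 e he⟩
  have hRmpos : 0 < Rm := by
    have hev := (eventually_Xc_lt_one hlam hn hev0).filter_mono (nhdsWithin_le_nhds (s := Ioi (0:ℝ)))
    obtain ⟨R, hR1, hR2⟩ := (hev.and self_mem_nhdsWithin).exists
    have hRD : R ∈ D := ⟨(le_of_lt hR2), hR1⟩
    exact lt_of_lt_of_le hR2 (le_csSup hbdd hRD)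
  have hsub : ∀ R : ℝ, 0 ≤ R → R < Rm → R ∈ D := by
    intro R h0 hR
    obtain ⟨R', hR'D, hRR'⟩ := exists_lt_of_lt_csSup ⟨0, hD0⟩ hR
    exact Dset_down hlam hR'D h0 hRR'.le
  have ht0 : 0 < t := lt_of_le_of_lt (gfun_nonneg hlam hn hD0) (by simpa [gfun_zero hlam hn] using hex 0 hD0)
  -- uniform bound away from 1 on [Rm/2, Rm)
  have key : ∀ e < n, ∃ δ > (0:ℝ), ∀ R ∈ D, Rm/2 ≤ R → Xc lam n e R ≤ 1 - δ := by
    intro e he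
    by_cases hcase : e = n - 1
    · have hl0' : 0 < lam 0 := hlam 0 (Nat.zero_le n)
      refine ⟨Rm / (2 * (lam 0 * t)), div_pos hRmpos (by nlinarith), ?_⟩
      intro R hRD hRhalf
      have hXlt : Xc lam n (n-1) R < 1 := hRD.2 (n-1) (Nat.sub_lt hn Nat.one_pos)
      have hgt := hex R hRD
      have hl0 : 0 < lam 0 := hlam 0 (Nat.zero_le n)
      have hden : 0 < lam 0 * (1 - Xc lam n (n-1) R) := mul_pos hl0 (by linarith)
      have hRlt : R < t * (lam 0 * (1 - Xc lam n (n-1) R)) := by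
        have : R / (lam 0 * (1 - Xc lam n (n-1) R)) < t := hgt
        calc R = (R / (lam 0 * (1 - Xc lam n (n-1) R))) * (lam 0 * (1 - Xc lam n (n-1) R)) := by
                rw [div_mul_cancel₀ R (ne_of_gt hden)]
          _ < t * (lam 0 * (1 - Xc lam n (n-1) R)) := by
                exact mul_lt_mul_of_pos_right this hden
      have h1 : R / (lam 0 * t) < 1 - Xc lam n (n-1) R := by
        rw [div_lt_iff₀ (by positivity)]
        nlinarith
      have h2 : Rm / (2 * (lam 0 * t)) ≤ R / (lam 0 * t) := by
        rw [div_le_div_iff₀ (by positivity) (by positivity)]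
        nlinarith
      rw [hcase]; linarith
    · have he1 : e + 1 < n := by omega
      set j := n - (e + 1) with hj
      have hj_le : j ≤ n := Nat.sub_le _ _
      have hlj : 0 < lam j := hlam j hj_le
      refine ⟨Rm / (2 * lam j), div_pos hRmpos (by nlinarith), ?_⟩
      intro R hRD hRhalf
      have hXe : Xc lam n e R < 1 := hRD.2 e he
      have hX1 : Xc lam n (e+1) R < 1 := hRD.2 (e+1) he1
      have hform : Xc lam n (e+1) R = R / (lam j * (1 - Xc lam n e R)) := rfl
      have hden : 0 < lam j * (1 - Xc lam n e R) := mul_pos hlj (by linarith)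
      have hRlt : R < lam j * (1 - Xc lam n e R) := by
        have : R / (lam j * (1 - Xc lam n e R)) < 1 := hform ▸ hX1
        calc R = R / (lam j * (1 - Xc lam n e R)) * (lam j * (1 - Xc lam n e R)) := by rw [div_mul_cancel₀ R (ne_of_gt hden)]
          _ < 1 * (lam j * (1 - Xc lam n e R)) := mul_lt_mul_of_pos_right this hden
          _ = lam j * (1 - Xc lam n e R) := one_mul _
      have h1 : R / lam j < 1 - Xc lam n e R := by
        rw [div_lt_iff₀ hlj]
        nlinarith
      have h2 : Rm / (2 * lam j) ≤ R / lam j := by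
        rw [div_le_div_iff₀ (by positivity) (by positivity)]
        nlinarith
      linarith
  -- continuity and strict bound at Rm
  have main : ∀ e, e < n → ContinuousAt (Xc lam n e) Rm ∧ Xc lam n e Rm < 1 := by
    intro e
    induction e using Nat.strong_induction_on with
    | _ e IH =>
      intro he
      have hcont : ContinuousAt (Xc lam n e) Rm :=
        Xc_contAt hlam e (fun e' he' => (IH e' he' (he'.trans he)).2)
      obtain ⟨δ, hδ, hbound⟩ := key e he
      have htend : Tendsto (Xc lam n e) (nhdsWithin Rm (Iio Rm)) (nhds (Xc lam n e Rm)) :=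
        hcont.tendsto.mono_left nhdsWithin_le_nhds
      have hevb : ∀ᶠ R in nhdsWithin Rm (Iio Rm), Xc lam n e R ≤ 1 - δ := by
        have hmem : Ioo (Rm/2) Rm ∈ nhdsWithin Rm (Iio Rm) :=
          Ioo_mem_nhdsLT_of_mem ⟨half_lt_self hRmpos, le_rfl⟩
        filter_upwards [hmem] with R hR
        exact hbound R (hsub R (by linarith [hR.1, half_pos hRmpos]) hR.2) hR.1.le
      have : Xc lam n e Rm ≤ 1 - δ := le_of_tendsto htend hevb
      exact ⟨hcont, by linarith⟩
  -- find a member of D beyond Rm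
  have hev : ∀ᶠ R in nhds Rm, ∀ e < n, Xc lam n e R < 1 :=
    eventually_Xc_lt_one hlam hn (fun e he => main e he)
  have hev2 : ∀ᶠ R in nhds Rm, 0 < R := eventually_gt_nhds hRmpos
  have := ((hev.and hev2).filter_mono (nhdsWithin_le_nhds (s := Ioi Rm)))
  obtain ⟨R, ⟨hR1, hR2⟩, hR3⟩ := (this.and self_mem_nhdsWithin).exists
  have hRD : R ∈ D := ⟨hR2.le, hR1⟩
  exact absurd (le_csSup hbdd hRD) (not_le.mpr hR3)

lemma rho_spec {t : ℝ} (ht : 0 ≤ t) :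
    rho lam n t ∈ Dset lam n ∧ gfun lam n (rho lam n t) = t := by
  obtain ⟨R₀, hR₀D, hgR₀⟩ := exists_gfun_eq hlam hn ht
  have hset : {R | R ∈ Dset lam n ∧ gfun lam n R = t} = {R₀} := by
    ext R
    constructor
    · rintro ⟨hRD, hgR⟩
      exact (gfun_strictMonoOn hlam hn).injOn hRD hR₀D (by rw [hgR, hgR₀])
    · rintro rfl
      exact ⟨hR₀D, hgR₀⟩
  rw [rho, hset, csInf_singleton]
  exact ⟨hR₀D, hgR₀⟩

lemma rho_gfun {R : ℝ} (hR : R ∈ Dset lam n) : rho lam n (gfun lam n R) = R := by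
  have h := rho_spec hlam hn (gfun_nonneg hlam hn hR)
  exact (gfun_strictMonoOn hlam hn).injOn h.1 hR h.2

lemma rho_zero : rho lam n 0 = 0 := by
  have := rho_gfun hlam hn (zero_mem_Dset hlam hn)
  rwa [gfun_zero hlam hn] at this

lemma rho_strictMonoOn : StrictMonoOn (rho lam n) (Ici 0) := by
  intro t ht t' ht' htt
  by_contra h
  push_neg at h
  have h1 := rho_spec hlam hn ht
  have h2 := rho_spec hlam hn ht'
  rcases eq_or_lt_of_le h with heq | hlt
  · rw [← h1.2, ← h2.2, heq] at htt; exact lt_irrefl _ htt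
  · have := gfun_strictMonoOn hlam hn h2.1 h1.1 hlt
    rw [h1.2, h2.2] at this
    exact absurd htt (not_lt.mpr this.le)

lemma rho_monoOn : MonotoneOn (rho lam n) (Ici 0) :=
  (rho_strictMonoOn hlam hn).monotoneOn

lemma rho_nonneg {t : ℝ} (ht : 0 ≤ t) : 0 ≤ rho lam n t := (rho_spec hlam hn ht).1.1

lemma rho_pos {t : ℝ} (ht : 0 < t) : 0 < rho lam n t := by
  rcases eq_or_lt_of_le (rho_nonneg hlam hn ht.le) with heq | h
  · exfalso
    have := (rho_spec hlam hn ht.le).2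
    rw [← heq, gfun_zero hlam hn] at this
    exact absurd this.symm (ne_of_gt ht)
  · exact h

lemma rho_exists_gt {t : ℝ} (ht : 0 ≤ t) : ∃ R' ∈ Dset lam n, rho lam n t < R' := by
  refine ⟨rho lam n (t+1), ((rho_spec hlam hn (by linarith)).1), ?_⟩
  exact rho_strictMonoOn hlam hn ht (by simp; linarith) (by linarith)

lemma rho_continuousWithinAt {a : ℝ} (ha : a ∈ Ici (0:ℝ)) :
    ContinuousWithinAt (rho lam n) (Ici 0) a := by
  have hmono : MonotoneOn (rho lam n) (Ici 0) := rho_monoOn hlam hn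
  have hIci : Ici (0:ℝ) ∈ nhdsWithin a (Ici a) :=
    mem_of_superset self_mem_nhdsWithin (Ici_subset_Ici.mpr ha)
  have hright : ContinuousWithinAt (rho lam n) (Ici a) a := by
    apply continuousWithinAt_right_of_monotoneOn_of_exists_between hmono hIci
    intro b hb
    obtain ⟨R', hR'D, hR'gt⟩ := rho_exists_gt hlam hn ha
    set R'' := min ((rho lam n a + b)/2) R' with hR''
    have hgt : rho lam n a < R'' := by
      apply lt_min (by linarith) hR'gt
    have hlt : R'' < b := lt_of_le_of_lt (min_le_left _ _) (by linarith)
    have hR''D : R'' ∈ Dset lam n :=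
      Dset_down hlam hR'D (le_trans (rho_nonneg hlam hn ha) hgt.le) (min_le_right _ _)
    refine ⟨gfun lam n R'', gfun_nonneg hlam hn hR''D, ?_⟩
    rw [rho_gfun hlam hn hR''D]
    exact ⟨hgt, hlt⟩
  rcases eq_or_lt_of_le (show (0:ℝ) ≤ a from ha) with heq | hapos
  · exact (hright.mono (by rw [← heq])).mono (le_refl _)
  · have hIic : Ici (0:ℝ) ∈ nhdsWithin a (Iic a) := by
      refine mem_of_superset (Ioc_mem_nhdsLE_of_mem ⟨hapos, le_rfl⟩) ?_
      intro y hy; exact le_of_lt hy.1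
    have hleft : ContinuousWithinAt (rho lam n) (Iic a) a := by
      apply continuousWithinAt_left_of_monotoneOn_of_exists_between hmono hIic
      intro b hb
      have hrpos : 0 < rho lam n a := rho_pos hlam hn hapos
      set R'' := max ((b + rho lam n a)/2) (rho lam n a / 2) with hR''
      have hgtb : b < R'' := lt_of_lt_of_le (by linarith) (le_max_left _ _)
      have hlt : R'' < rho lam n a := max_lt (by linarith) (by linarith)
      have hR''pos : 0 ≤ R'' := le_trans (by linarith) (le_max_right _ _)
      have hR''D : R'' ∈ Dset lam n :=
        Dset_down hlam (rho_spec hlam hn ha).1 hR''pos hlt.le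
      refine ⟨gfun lam n R'', gfun_nonneg hlam hn hR''D, ?_⟩
      rw [rho_gfun hlam hn hR''D]
      exact ⟨hgtb, hlt⟩
    have : ContinuousWithinAt (rho lam n) (Ici a ∪ Iic a) a := hright.union hleft
    have huniv : ContinuousAt (rho lam n) a := by
      rw [← continuousWithinAt_univ]
      have : Ici a ∪ Iic a = univ := by
        ext y; simp [le_total a y]
      rwa [this] at ‹ContinuousWithinAt (rho lam n) (Ici a ∪ Iic a) a›
    exact huniv.continuousWithinAt

end

end ORFMAux

namespace ORFMAux

/-- The candidate steady state as a function of `zE`. -/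
noncomputable def stv (S : ORFM) (zE : ℝ) : ORFMState where
  x := fun p i j => Xc (S.lam p i) (S.n p i) (S.n p i - j)
        (rho (S.lam p i) (S.n p i) (S.G p i (S.kp p / S.km p * zE)))
  z := fun p => S.kp p / S.km p * zE
  zE := zE

noncomputable def Ffun (S : ORFM) (zE : ℝ) : ℝ := S.NrOf (stv S zE)

variable {S : ORFM}

lemma hlam' {p i : ℕ} (hp : p < S.M) (hi : i < S.s p) :
    ∀ j ≤ S.n p i, 0 < S.lam p i j := fun j hj => S.hlam p hp i hi j hj

lemma hn' {p i : ℕ} (hp : p < S.M) (hi : i < S.s p) : 1 ≤ S.n p i := S.hn p hp i hi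

lemma G_nonneg {p i : ℕ} (hp : p < S.M) (hi : i < S.s p) {z : ℝ} (hz : 0 ≤ z) :
    0 ≤ S.G p i z := by
  rcases eq_or_lt_of_le hz with heq | h
  · rw [← heq, S.hG_zero p hp i hi]
  · have := S.hG_mono p hp i hi (self_mem_Ici) (le_of_lt h) h
    rw [S.hG_zero p hp i hi] at this
    exact this.le

lemma G_pos {p i : ℕ} (hp : p < S.M) (hi : i < S.s p) {z : ℝ} (hz : 0 < z) :
    0 < S.G p i z := by
  have := S.hG_mono p hp i hi (self_mem_Ici) hz.le hz
  rwa [S.hG_zero p hp i hi] at this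

lemma cz_nonneg {p : ℕ} (hp : p < S.M) : 0 ≤ S.kp p / S.km p :=
  (div_pos (S.hkp p hp) (S.hkm p hp)).le

/-- At the candidate state, every flow on strand `(p,i)` equals `rho (G (z p))`. -/
lemma flow_stv {zE : ℝ} (hzE : 0 ≤ zE) {p i : ℕ} (hp : p < S.M) (hi : i < S.s p)
    {k : ℕ} (hk : k ≤ S.n p i) :
    S.flow (stv S zE) p i k
      = rho (S.lam p i) (S.n p i) (S.G p i (S.kp p / S.km p * zE)) := by
  set lam := S.lam p i with hlamdef
  set nn := S.n p i with hnn
  have hlam : ∀ j ≤ nn, 0 < lam j := hlam' hp hi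
  have hn : 1 ≤ nn := hn' hp hi
  set t := S.G p i (S.kp p / S.km p * zE) with htdef
  have ht : 0 ≤ t := G_nonneg hp hi (mul_nonneg (cz_nonneg hp) hzE)
  set R := rho lam nn t with hRdef
  obtain ⟨hRD, hgR⟩ := rho_spec hlam hn ht
  have hRD : R ∈ Dset lam nn := hRD
  have hgR : gfun lam nn R = t := hgR
  have hxval : ∀ j, (stv S zE).x p i j = Xc lam nn (nn - j) R := fun j => rfl
  have hX : ∀ e < nn, Xc lam nn e R < 1 := hRD.2
  have hRnn : 0 ≤ R := hRD.1
  rcases Nat.eq_zero_or_pos k with rfl | hkpos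
  · -- initiation flow
    show lam 0 * S.G p i ((stv S zE).z p) * (1 - (stv S zE).x p i 1) = R
    have hz : (stv S zE).z p = S.kp p / S.km p * zE := rfl
    rw [hz, hxval 1, ← htdef]
    have h1 : Xc lam nn (nn - 1) R < 1 := hX _ (Nat.sub_lt hn Nat.one_pos)
    have hl0 : 0 < lam 0 := hlam 0 (Nat.zero_le nn)
    rw [gfun] at hgR
    have hne : lam 0 * (1 - Xc lam nn (nn - 1) R) ≠ 0 := ne_of_gt (mul_pos hl0 (by linarith))
    rw [div_eq_iff hne] at hgR
    linarith [hgR]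
  rcases eq_or_lt_of_le hk with rfl | hklt
  · -- termination flow
    have hnn0 : nn ≠ 0 := by omega
    have hform : S.flow (stv S zE) p i nn = lam nn * (stv S zE).x p i nn := by
      rw [ORFM.flow]
      rw [if_neg hnn0, if_pos rfl]
    rw [hform, hxval nn, Nat.sub_self]
    show lam nn * (R / lam nn) = R
    have := hlam nn le_rfl
    field_simp
  · -- elongation flow
    have hk0 : k ≠ 0 := by omega
    have hkn : k ≠ nn := by omega
    have hform : S.flow (stv S zE) p i k
        = lam k * (stv S zE).x p i k * (1 - (stv S zE).x p i (k+1)) := by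
      rw [ORFM.flow, if_neg hk0, if_neg hkn]
    rw [hform, hxval k, hxval (k+1)]
    have hd : nn - k = (nn - (k+1)) + 1 := by omega
    have hsucc : Xc lam nn ((nn - (k+1)) + 1) R
        = R / (lam (nn - ((nn - (k+1)) + 1)) * (1 - Xc lam nn (nn - (k+1)) R)) := rfl
    have hidx : nn - ((nn - (k+1)) + 1) = k := by omega
    rw [hd, hsucc, hidx]
    have h1 : Xc lam nn (nn - (k+1)) R < 1 := hX _ (by omega)
    have hlk : 0 < lam k := hlam k hk
    set X := Xc lam nn (nn - (k + 1)) R with hXdef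
    have hne : lam k * (1 - X) ≠ 0 := ne_of_gt (mul_pos hlk (by linarith))
    field_simp
    linear_combination R * inv_mul_cancel₀ (sub_pos.mpr h1).ne'

lemma inOmega_stv {zE : ℝ} (hzE : 0 ≤ zE) : S.inOmega (stv S zE) := by
  refine ⟨?_, hzE, fun p hp => mul_nonneg (cz_nonneg hp) hzE⟩
  intro p hp i hi j hj1 hj2
  have hlam := hlam' hp hi
  have hn := hn' hp hi
  have ht : 0 ≤ S.G p i (S.kp p / S.km p * zE) :=
    G_nonneg hp hi (mul_nonneg (cz_nonneg hp) hzE)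
  obtain ⟨hRD, -⟩ := rho_spec hlam hn ht
  have hd : S.n p i - j < S.n p i := by omega
  exact ⟨Xc_nonneg hlam hRD.1 _ (fun e he => hRD.2 e (he.trans hd)), (hRD.2 _ hd).le⟩

lemma x_stv_mem_Ioo {zE : ℝ} (hzE : 0 < zE) {p i j : ℕ} (hp : p < S.M) (hi : i < S.s p)
    (hj1 : 1 ≤ j) (hj2 : j ≤ S.n p i) : (stv S zE).x p i j ∈ Ioo (0:ℝ) 1 := by
  have hlam := hlam' hp hi
  have hn := hn' hp hi
  have hc : 0 < S.kp p / S.km p := div_pos (S.hkp p hp) (S.hkm p hp)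
  have ht : 0 < S.G p i (S.kp p / S.km p * zE) := G_pos hp hi (mul_pos hc hzE)
  obtain ⟨hRD, -⟩ := rho_spec hlam hn ht.le
  have hRpos : 0 < rho (S.lam p i) (S.n p i) (S.G p i (S.kp p / S.km p * zE)) :=
    rho_pos hlam hn ht
  have hd : S.n p i - j < S.n p i := by omega
  exact ⟨Xc_pos hlam hRpos _ (fun e he => hRD.2 e (he.trans hd)), hRD.2 _ hd⟩

lemma isSteady_stv {zE : ℝ} (hzE : 0 ≤ zE) : S.isSteady (stv S zE) := by
  refine ⟨?_, ?_, ?_⟩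
  · intro p hp i hi j hj1 hj2
    rw [ORFM.fx, flow_stv hzE hp hi (by omega), flow_stv hzE hp hi hj2, sub_self]
  · intro p hp
    have hflows : ∀ i ∈ Finset.range (S.s p),
        (S.m p i : ℝ) * S.flow (stv S zE) p i (S.n p i)
          = (S.m p i : ℝ) * S.flow (stv S zE) p i 0 := by
      intro i hi
      rw [flow_stv hzE hp (Finset.mem_range.mp hi) le_rfl,
        flow_stv hzE hp (Finset.mem_range.mp hi) (Nat.zero_le _)]
    rw [ORFM.fz, Finset.sum_congr rfl hflows]
    have h2 : (stv S zE).z p = S.kp p / S.km p * zE := rfl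
    have h1 : (stv S zE).zE = zE := rfl
    rw [h1, h2]
    have hkm : S.km p ≠ 0 := ne_of_gt (S.hkm p hp)
    field_simp
    ring
  · rw [ORFM.fzE, ← Finset.sum_sub_distrib]
    apply Finset.sum_eq_zero
    intro p hp
    have h2 : (stv S zE).z p = S.kp p / S.km p * zE := rfl
    have h1 : (stv S zE).zE = zE := rfl
    rw [h1, h2]
    have hkm : S.km p ≠ 0 := ne_of_gt (S.hkm p (Finset.mem_range.mp hp))
    field_simp
    ring

lemma Ffun_def (zE : ℝ) : Ffun S zE
    = zE + (∑ p ∈ Finset.range S.M, S.kp p / S.km p * zE)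
      + ∑ p ∈ Finset.range S.M, ∑ i ∈ Finset.range (S.s p), (S.m p i : ℝ) *
          ∑ j ∈ Finset.Icc 1 (S.n p i), Xc (S.lam p i) (S.n p i) (S.n p i - j)
            (rho (S.lam p i) (S.n p i) (S.G p i (S.kp p / S.km p * zE))) := rfl

lemma Ffun_zero : Ffun S 0 = 0 := by
  rw [Ffun_def]
  have h1 : ∑ p ∈ Finset.range S.M, S.kp p / S.km p * (0:ℝ) = 0 := by
    apply Finset.sum_eq_zero; intro p _; ring
  have h2 : ∑ p ∈ Finset.range S.M, ∑ i ∈ Finset.range (S.s p), (S.m p i : ℝ) *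
      ∑ j ∈ Finset.Icc 1 (S.n p i), Xc (S.lam p i) (S.n p i) (S.n p i - j)
        (rho (S.lam p i) (S.n p i) (S.G p i (S.kp p / S.km p * 0))) = 0 := by
    apply Finset.sum_eq_zero; intro p hp
    apply Finset.sum_eq_zero; intro i hi
    have hp' := Finset.mem_range.mp hp
    have hi' := Finset.mem_range.mp hi
    have hG0 : S.G p i (S.kp p / S.km p * 0) = 0 := by
      rw [mul_zero, S.hG_zero p hp' i hi']
    rw [hG0, rho_zero (hlam' hp' hi') (hn' hp' hi')]
    simp [Xc_zero]
  rw [h1, h2]; ring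

lemma Ffun_nonneg_rest {zE : ℝ} (hzE : 0 ≤ zE) : zE ≤ Ffun S zE := by
  rw [Ffun_def]
  have h1 : 0 ≤ ∑ p ∈ Finset.range S.M, S.kp p / S.km p * zE := by
    apply Finset.sum_nonneg; intro p hp
    exact mul_nonneg (cz_nonneg (Finset.mem_range.mp hp)) hzE
  have h2 : 0 ≤ ∑ p ∈ Finset.range S.M, ∑ i ∈ Finset.range (S.s p), (S.m p i : ℝ) *
      ∑ j ∈ Finset.Icc 1 (S.n p i), Xc (S.lam p i) (S.n p i) (S.n p i - j)
        (rho (S.lam p i) (S.n p i) (S.G p i (S.kp p / S.km p * zE))) := by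
    apply Finset.sum_nonneg; intro p hp
    apply Finset.sum_nonneg; intro i hi
    have hp' := Finset.mem_range.mp hp
    have hi' := Finset.mem_range.mp hi
    apply mul_nonneg (Nat.cast_nonneg _)
    apply Finset.sum_nonneg; intro j hj
    obtain ⟨hj1, hj2⟩ := Finset.mem_Icc.mp hj
    have ht : 0 ≤ S.G p i (S.kp p / S.km p * zE) :=
      G_nonneg hp' hi' (mul_nonneg (cz_nonneg hp') hzE)
    obtain ⟨hRD, -⟩ := rho_spec (hlam' hp' hi') (hn' hp' hi') ht
    exact Xc_nonneg (hlam' hp' hi') hRD.1 _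
      (fun e he => hRD.2 e (he.trans (by omega)))
  linarith

lemma term_le_term {a b : ℝ} (ha : 0 ≤ a) (hab : a ≤ b) {p i j : ℕ}
    (hp : p < S.M) (hi : i < S.s p) (hj1 : 1 ≤ j) (hj2 : j ≤ S.n p i) :
    Xc (S.lam p i) (S.n p i) (S.n p i - j)
        (rho (S.lam p i) (S.n p i) (S.G p i (S.kp p / S.km p * a)))
      ≤ Xc (S.lam p i) (S.n p i) (S.n p i - j)
        (rho (S.lam p i) (S.n p i) (S.G p i (S.kp p / S.km p * b))) := by
  have hlam := hlam' hp hi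
  have hn := hn' hp hi
  have hca : (0:ℝ) ≤ S.kp p / S.km p * a := mul_nonneg (cz_nonneg hp) ha
  have hcb : (0:ℝ) ≤ S.kp p / S.km p * b := mul_nonneg (cz_nonneg hp) (ha.trans hab)
  have hGle : S.G p i (S.kp p / S.km p * a) ≤ S.G p i (S.kp p / S.km p * b) :=
    (S.hG_mono p hp i hi).monotoneOn hca hcb
      (mul_le_mul_of_nonneg_left hab (cz_nonneg hp))
  have hGa : 0 ≤ S.G p i (S.kp p / S.km p * a) := G_nonneg hp hi hca
  have hGb : 0 ≤ S.G p i (S.kp p / S.km p * b) := G_nonneg hp hi hcb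
  have hrle := rho_monoOn hlam hn hGa hGb hGle
  obtain ⟨hRDb, -⟩ := rho_spec hlam hn hGb
  exact Xc_mono hlam (rho_nonneg hlam hn hGa) hrle _
    (fun e he => hRDb.2 e (lt_of_lt_of_le he (by omega)))

lemma Ffun_strictMonoOn : StrictMonoOn (Ffun S) (Ici 0) := by
  intro a ha b hb hab
  rw [Ffun_def, Ffun_def]
  have h1 : ∑ p ∈ Finset.range S.M, S.kp p / S.km p * a
      ≤ ∑ p ∈ Finset.range S.M, S.kp p / S.km p * b := by
    apply Finset.sum_le_sum; intro p hp
    exact mul_le_mul_of_nonneg_left hab.le (cz_nonneg (Finset.mem_range.mp hp))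
  have h2 : ∑ p ∈ Finset.range S.M, ∑ i ∈ Finset.range (S.s p), (S.m p i : ℝ) *
        ∑ j ∈ Finset.Icc 1 (S.n p i), Xc (S.lam p i) (S.n p i) (S.n p i - j)
          (rho (S.lam p i) (S.n p i) (S.G p i (S.kp p / S.km p * a)))
      ≤ ∑ p ∈ Finset.range S.M, ∑ i ∈ Finset.range (S.s p), (S.m p i : ℝ) *
        ∑ j ∈ Finset.Icc 1 (S.n p i), Xc (S.lam p i) (S.n p i) (S.n p i - j)
          (rho (S.lam p i) (S.n p i) (S.G p i (S.kp p / S.km p * b))) := by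
    apply Finset.sum_le_sum; intro p hp
    apply Finset.sum_le_sum; intro i hi
    apply mul_le_mul_of_nonneg_left _ (Nat.cast_nonneg _)
    apply Finset.sum_le_sum; intro j hj
    obtain ⟨hj1, hj2⟩ := Finset.mem_Icc.mp hj
    exact term_le_term ha hab.le (Finset.mem_range.mp hp) (Finset.mem_range.mp hi) hj1 hj2
  linarith

lemma Ffun_continuousOn : ContinuousOn (Ffun S) (Ici 0) := by
  have heq : ∀ zE : ℝ, Ffun S zE
      = zE + (∑ p ∈ Finset.range S.M, S.kp p / S.km p * zE)
        + ∑ p ∈ Finset.range S.M, ∑ i ∈ Finset.range (S.s p), (S.m p i : ℝ) *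
            ∑ j ∈ Finset.Icc 1 (S.n p i), Xc (S.lam p i) (S.n p i) (S.n p i - j)
              (rho (S.lam p i) (S.n p i) (S.G p i (S.kp p / S.km p * zE))) :=
    fun zE => Ffun_def zE
  rw [show Ffun S = fun zE => zE + (∑ p ∈ Finset.range S.M, S.kp p / S.km p * zE)
        + ∑ p ∈ Finset.range S.M, ∑ i ∈ Finset.range (S.s p), (S.m p i : ℝ) *
            ∑ j ∈ Finset.Icc 1 (S.n p i), Xc (S.lam p i) (S.n p i) (S.n p i - j)
              (rho (S.lam p i) (S.n p i) (S.G p i (S.kp p / S.km p * zE)))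
      from funext heq]
  apply ContinuousOn.add
  apply ContinuousOn.add
  · exact continuousOn_id
  · apply continuousOn_finset_sum
    intro p _
    exact (continuous_const.mul continuous_id).continuousOn
  · apply continuousOn_finset_sum
    intro p hp
    apply continuousOn_finset_sum
    intro i hi
    apply ContinuousOn.mul continuousOn_const
    apply continuousOn_finset_sum
    intro j hj
    obtain ⟨hj1, hj2⟩ := Finset.mem_Icc.mp hj
    have hp' := Finset.mem_range.mp hp
    have hi' := Finset.mem_range.mp hi
    have hlam := hlam' hp' hi'
    have hn := hn' hp' hi'
    intro a ha
    have ha' : (0:ℝ) ≤ a := ha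
    have hca : (0:ℝ) ≤ S.kp p / S.km p * a := mul_nonneg (cz_nonneg hp') ha'
    have hGa : 0 ≤ S.G p i (S.kp p / S.km p * a) := G_nonneg hp' hi' hca
    have hc1 : ContinuousWithinAt (fun zE : ℝ => S.kp p / S.km p * zE) (Ici 0) a :=
      (continuous_const.mul continuous_id).continuousWithinAt
    have hmap1 : MapsTo (fun zE : ℝ => S.kp p / S.km p * zE) (Ici 0) (Ici 0) :=
      fun y hy => mul_nonneg (cz_nonneg hp') hy
    have hc2 : ContinuousWithinAt (S.G p i) (Ici 0) (S.kp p / S.km p * a) :=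
      ((S.hG_smooth p hp' i hi').continuousOn) _ hca
    have hmap2 : MapsTo (S.G p i) (Ici 0) (Ici 0) := fun y hy => G_nonneg hp' hi' hy
    have hc3 : ContinuousWithinAt (rho (S.lam p i) (S.n p i)) (Ici 0)
        (S.G p i (S.kp p / S.km p * a)) := rho_continuousWithinAt hlam hn hGa
    obtain ⟨hRD, -⟩ := rho_spec hlam hn hGa
    have hc4 : ContinuousAt (Xc (S.lam p i) (S.n p i) (S.n p i - j))
        (rho (S.lam p i) (S.n p i) (S.G p i (S.kp p / S.km p * a))) :=
      Xc_contAt hlam _ (fun e he => hRD.2 e (lt_of_lt_of_le he (by omega)))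
    have hA : ContinuousWithinAt ((S.G p i) ∘ (fun zE : ℝ => S.kp p / S.km p * zE))
        (Ici 0) a := ContinuousWithinAt.comp hc2 hc1 hmap1
    have hB : MapsTo ((S.G p i) ∘ (fun zE : ℝ => S.kp p / S.km p * zE)) (Ici 0) (Ici 0) :=
      hmap2.comp hmap1
    have hC : ContinuousWithinAt
        ((rho (S.lam p i) (S.n p i)) ∘ ((S.G p i) ∘ (fun zE : ℝ => S.kp p / S.km p * zE)))
        (Ici 0) a := ContinuousWithinAt.comp hc3 hA hB
    have hc4' : ContinuousAt (Xc (S.lam p i) (S.n p i) (S.n p i - j))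
        (((rho (S.lam p i) (S.n p i)) ∘ ((S.G p i) ∘ (fun zE : ℝ => S.kp p / S.km p * zE))) a) :=
      hc4
    exact hc4'.comp_continuousWithinAt hC

lemma flows_const {st' : ORFMState} {p i : ℕ}
    (hfx : ∀ j, 1 ≤ j → j ≤ S.n p i → S.fx st' p i j = 0) :
    ∀ k, k ≤ S.n p i → S.flow st' p i k = S.flow st' p i 0 := by
  intro k
  induction k with
  | zero => intro _; rfl
  | succ k IH =>
    intro hk
    have h1 := hfx (k+1) (by omega) hk
    rw [ORFM.fx] at h1
    have h2 : k + 1 - 1 = k := by omega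
    rw [h2] at h1
    have h3 := IH (by omega)
    linarith

lemma strand_profile {st' : ORFMState} {p i : ℕ} (hp : p < S.M) (hi : i < S.s p)
    (hΩ : S.inOmega st')
    (hfx : ∀ j, 1 ≤ j → j ≤ S.n p i → S.fx st' p i j = 0) :
    ∀ j, 1 ≤ j → j ≤ S.n p i →
      st'.x p i j = Xc (S.lam p i) (S.n p i) (S.n p i - j)
        (rho (S.lam p i) (S.n p i) (S.G p i (st'.z p))) := by
  set lam := S.lam p i with hlamdef
  set nn := S.n p i with hnn
  have hlam : ∀ j ≤ nn, 0 < lam j := hlam' hp hi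
  have hn : 1 ≤ nn := hn' hp hi
  have hxmem : ∀ j, 1 ≤ j → j ≤ nn → st'.x p i j ∈ Icc (0:ℝ) 1 :=
    fun j h1 h2 => hΩ.1 p hp i hi j h1 h2
  have hflows := flows_const hfx
  set R' := S.flow st' p i nn with hR'def
  have hflowR : ∀ k, k ≤ nn → S.flow st' p i k = R' := by
    intro k hk; rw [hflows k hk, ← hflows nn le_rfl]
  have hfn : S.flow st' p i nn = lam nn * st'.x p i nn := by
    rw [ORFM.flow, if_neg (by omega : ¬ nn = 0), if_pos rfl]
  have hfmid : ∀ k, 1 ≤ k → k < nn →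
      S.flow st' p i k = lam k * st'.x p i k * (1 - st'.x p i (k+1)) := by
    intro k h1 h2; rw [ORFM.flow, if_neg (by omega), if_neg (by omega)]
  have hf0 : S.flow st' p i 0 = lam 0 * S.G p i (st'.z p) * (1 - st'.x p i 1) := by
    rw [ORFM.flow, if_pos rfl]
  have hR'nonneg : 0 ≤ R' := by
    rw [hR'def, hfn]
    exact mul_nonneg (hlam nn le_rfl).le (hxmem nn hn le_rfl).1
  rcases eq_or_lt_of_le hR'nonneg with hR0 | hRpos
  · -- the zero-flow case
    have hzero : ∀ d, d < nn → st'.x p i (nn - d) = 0 := by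
      intro d
      induction d with
      | zero =>
        intro _
        have h : lam nn * st'.x p i nn = 0 := by rw [← hfn, hflowR nn le_rfl, ← hR0]
        rw [Nat.sub_zero]
        exact (mul_eq_zero.mp h).resolve_left (ne_of_gt (hlam nn le_rfl))
      | succ d IH =>
        intro hd
        have hdnn : d < nn := by omega
        have hprev : st'.x p i (nn - d) = 0 := IH hdnn
        have hj1 : 1 ≤ nn - (d+1) := by omega
        have hjlt : nn - (d+1) < nn := by omega
        have hjp1 : nn - (d+1) + 1 = nn - d := by omega
        have heq := hfmid (nn - (d+1)) hj1 hjlt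
        rw [hflowR _ hjlt.le, ← hR0, hjp1, hprev] at heq
        have h : lam (nn - (d+1)) * st'.x p i (nn - (d+1)) = 0 := by linarith
        exact (mul_eq_zero.mp h).resolve_left (ne_of_gt (hlam _ hjlt.le))
    intro j hj1 hj2
    have hx1 : st'.x p i 1 = 0 := by
      have h := hzero (nn-1) (by omega)
      rwa [show nn - (nn-1) = 1 by omega] at h
    have hG0 : S.G p i (st'.z p) = 0 := by
      have h0 : lam 0 * S.G p i (st'.z p) * (1 - st'.x p i 1) = R' := by
        rw [← hf0, hflowR 0 (by omega)]
      rw [hx1, ← hR0] at h0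
      have h : lam 0 * S.G p i (st'.z p) = 0 := by linarith
      exact (mul_eq_zero.mp h).resolve_left (ne_of_gt (hlam 0 (Nat.zero_le nn)))
    rw [hG0, rho_zero hlam hn, Xc_zero]
    have h := hzero (nn - j) (by omega)
    rwa [show nn - (nn - j) = j by omega] at h
  · -- the positive-flow case
    have hxlt1 : ∀ j, 1 ≤ j → j ≤ nn → st'.x p i j < 1 := by
      intro j h1 h2
      rcases lt_or_eq_of_le (hxmem j h1 h2).2 with h | h
      · exact h
      · exfalso
        rcases Nat.eq_or_lt_of_le h1 with h1e | h1l
        · -- j = 1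
          have h0 : lam 0 * S.G p i (st'.z p) * (1 - st'.x p i 1) = R' := by
            rw [← hf0, hflowR 0 (by omega)]
          have hxx : st'.x p i 1 = 1 := by rw [h1e]; exact h
          rw [hxx] at h0
          simp at h0
          linarith
        · -- j ≥ 2
          have hmid := hfmid (j-1) (by omega) (by omega)
          rw [hflowR (j-1) (by omega), show j - 1 + 1 = j by omega, h] at hmid
          simp at hmid
          linarith
    have hprof : ∀ d, d < nn → st'.x p i (nn - d) = Xc lam nn d R' ∧ Xc lam nn d R' < 1 := by
      intro d
      induction d with
      | zero =>
        intro _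
        have h : lam nn * st'.x p i nn = R' := by rw [← hfn, hflowR nn le_rfl]
        have hval : st'.x p i nn = R' / lam nn := by
          rw [eq_div_iff (ne_of_gt (hlam nn le_rfl))]; linarith
        rw [Nat.sub_zero]
        refine ⟨hval, ?_⟩
        show R' / lam nn < 1
        rw [← hval]; exact hxlt1 nn hn le_rfl
      | succ d IH =>
        intro hd
        obtain ⟨hprev, hprevlt⟩ := IH (by omega)
        have hj1 : 1 ≤ nn - (d+1) := by omega
        have hjlt : nn - (d+1) < nn := by omega
        have hjp1 : nn - (d+1) + 1 = nn - d := by omega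
        have heq := hfmid (nn - (d+1)) hj1 hjlt
        rw [hflowR _ hjlt.le, hjp1, hprev] at heq
        have hlj : 0 < lam (nn - (d+1)) := hlam _ hjlt.le
        have hden : 0 < lam (nn - (d+1)) * (1 - Xc lam nn d R') := mul_pos hlj (by linarith)
        have hval : st'.x p i (nn - (d+1)) = R' / (lam (nn - (d+1)) * (1 - Xc lam nn d R')) := by
          rw [eq_div_iff (ne_of_gt hden)]; linarith [heq]
        have hXc : Xc lam nn (d+1) R' = R' / (lam (nn - (d+1)) * (1 - Xc lam nn d R')) := rfl
        refine ⟨by rw [hval, hXc], ?_⟩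
        rw [hXc, ← hval]
        exact hxlt1 _ hj1 hjlt.le
    have hR'D : R' ∈ Dset lam nn := by
      refine ⟨hR'nonneg, fun e he => (hprof e he).2⟩
    have hgf : S.G p i (st'.z p) = gfun lam nn R' := by
      have h0 : lam 0 * S.G p i (st'.z p) * (1 - st'.x p i 1) = R' := by
        rw [← hf0, hflowR 0 (by omega)]
      have hx1 : st'.x p i 1 = Xc lam nn (nn - 1) R' := by
        have h := (hprof (nn-1) (by omega)).1
        rwa [show nn - (nn-1) = 1 by omega] at h
      rw [hx1] at h0
      have hXlt : Xc lam nn (nn-1) R' < 1 := hR'D.2 _ (by omega)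
      have hl0 : 0 < lam 0 := hlam 0 (Nat.zero_le nn)
      rw [gfun, eq_div_iff (ne_of_gt (mul_pos hl0 (by linarith)))]
      linear_combination h0
    intro j hj1 hj2
    rw [hgf, rho_gfun hlam hn hR'D]
    have h := (hprof (nn - j) (by omega)).1
    rwa [show nn - (nn - j) = j by omega] at h

lemma z_eq {st' : ORFMState} (hst : S.isSteady st') {p : ℕ} (hp : p < S.M) :
    st'.z p = S.kp p / S.km p * st'.zE := by
  have hfz := hst.2.1 p hp
  rw [ORFM.fz] at hfz
  have hsum : ∑ i ∈ Finset.range (S.s p), (S.m p i : ℝ) * S.flow st' p i (S.n p i)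
      = ∑ i ∈ Finset.range (S.s p), (S.m p i : ℝ) * S.flow st' p i 0 := by
    apply Finset.sum_congr rfl
    intro i hi
    rw [flows_const (fun j h1 h2 => hst.1 p hp i (Finset.mem_range.mp hi) j h1 h2)
      (S.n p i) le_rfl]
  rw [hsum] at hfz
  have hkm : (0:ℝ) < S.km p := S.hkm p hp
  field_simp
  linarith [hfz]

lemma stateEq_stv {st' : ORFMState} (hΩ : S.inOmega st') (hst : S.isSteady st') :
    S.stateEq st' (stv S st'.zE) := by
  refine ⟨?_, fun p hp => z_eq hst hp, rfl⟩
  intro p hp i hi j hj1 hj2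
  have h := strand_profile hp hi hΩ (fun j h1 h2 => hst.1 p hp i hi j h1 h2) j hj1 hj2
  rw [h, z_eq hst hp]
  rfl

lemma NrOf_congr {a b : ORFMState} (h : S.stateEq a b) : S.NrOf a = S.NrOf b := by
  rw [ORFM.NrOf, ORFM.NrOf, h.2.2]
  congr 1
  · congr 1
    exact Finset.sum_congr rfl (fun p hp => h.2.1 p (Finset.mem_range.mp hp))
  · apply Finset.sum_congr rfl; intro p hp
    apply Finset.sum_congr rfl; intro i hi
    congr 1
    apply Finset.sum_congr rfl; intro j hj
    obtain ⟨h1, h2⟩ := Finset.mem_Icc.mp hj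
    exact h.1 p (Finset.mem_range.mp hp) i (Finset.mem_range.mp hi) j h1 h2

end ORFMAux

/-- For every fixed total number of ribosomes `Nr > 0` there
is exactly one steady state of the ORFM in `Ω` with total ribosome count `Nr`
(uniqueness up to the meaningful coordinates), and this steady state is
strictly positive: all codon occupancies lie in `(0,1)` and all pools are
strictly positive. -/
theorem orfm_unique_positive_steady_state (S : ORFM) (Nr : ℝ) (hNr : 0 < Nr) :
    ∃ st : ORFMState,
      (S.inOmega st ∧ S.NrOf st = Nr ∧ S.isSteady st)
      ∧ (∀ p < S.M, ∀ i < S.s p, ∀ j, 1 ≤ j → j ≤ S.n p i →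
          st.x p i j ∈ Set.Ioo (0:ℝ) 1)
      ∧ 0 < st.zE ∧ (∀ p < S.M, 0 < st.z p)
      ∧ ∀ st' : ORFMState, S.inOmega st' → S.NrOf st' = Nr → S.isSteady st' →
          S.stateEq st' st := by
  classical
  have hcont : ContinuousOn (ORFMAux.Ffun S) (Set.Icc 0 Nr) :=
    ORFMAux.Ffun_continuousOn.mono Set.Icc_subset_Ici_self
  have hivt := intermediate_value_Icc hNr.le hcont
  have hmem : Nr ∈ Set.Icc (ORFMAux.Ffun S 0) (ORFMAux.Ffun S Nr) := by
    constructor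
    · rw [ORFMAux.Ffun_zero]; exact hNr.le
    · exact ORFMAux.Ffun_nonneg_rest hNr.le
  obtain ⟨zE0, hzE0mem, hF⟩ := hivt hmem
  have hzE0nonneg : 0 ≤ zE0 := hzE0mem.1
  have hzE0pos : 0 < zE0 := by
    rcases eq_or_lt_of_le hzE0nonneg with heq | h
    · exfalso; rw [← heq, ORFMAux.Ffun_zero] at hF; exact absurd hF (ne_of_lt hNr)
    · exact h
  refine ⟨ORFMAux.stv S zE0,
    ⟨ORFMAux.inOmega_stv hzE0nonneg, hF, ORFMAux.isSteady_stv hzE0nonneg⟩,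
    ?_, ?_, ?_, ?_⟩
  · intro p hp i hi j hj1 hj2
    exact ORFMAux.x_stv_mem_Ioo hzE0pos hp hi hj1 hj2
  · exact hzE0pos
  · intro p hp
    exact mul_pos (div_pos (S.hkp p hp) (S.hkm p hp)) hzE0pos
  · intro st' hΩ hNr' hsteady
    have hEq := ORFMAux.stateEq_stv hΩ hsteady
    have hFz : ORFMAux.Ffun S st'.zE = Nr := by
      rw [ORFMAux.Ffun, ← ORFMAux.NrOf_congr hEq]; exact hNr'
    have hzE' : 0 ≤ st'.zE := hΩ.2.1
    have hzz : st'.zE = zE0 :=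
      ORFMAux.Ffun_strictMonoOn.injOn hzE' hzE0nonneg (by rw [hFz, hF])
    rw [hzz] at hEq
    exact hEq
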